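/- Let d ≥ 1 and let a_1, …, a_m be vectors in the Euclidean space ℝ^d. Then the supremum over all r ∈ ℝ^d with ‖r‖₂ = 1 of ∑_{j=1}^m max(⟨r, a_j⟩, 0) equals the maximum over b ∈ {0,1}^m of ‖∑_{j=1}^m b_j a_j‖₂. -/

import Mathlib

open scoped RealInnerProductSpace BigOperators

/-- The Soft Attackability Estimator identity (Eq. (11) with `p = q = 2`): the supremum
over unit directions `r` of `∑ j, max(⟪r, a j⟫, 0)` equals the maximum over subsets
`b ∈ {0,1}^m` of `‖∑ j, b j • a j‖₂`. -/
theorem sup_sum_posPart_inner_sphere_eq_max_subset_sum_norm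
    {d m : ℕ} (hd : 1 ≤ d) (a : Fin m → EuclideanSpace ℝ (Fin d)) :
    (⨆ r : {r : EuclideanSpace ℝ (Fin d) // ‖r‖ = 1},
        ∑ j, max ⟪(r : EuclideanSpace ℝ (Fin d)), a j⟫ 0) =
      ⨆ b : Fin m → Bool, ‖∑ j, if b j then a j else 0‖ := by
  have hne : Nonempty {r : EuclideanSpace ℝ (Fin d) // ‖r‖ = 1} := by
    refine ⟨⟨EuclideanSpace.single ⟨0, hd⟩ (1:ℝ), ?_⟩⟩
    simp [EuclideanSpace.norm_single]
  have hbddL : BddAbove (Set.range fun r : {r : EuclideanSpace ℝ (Fin d) // ‖r‖ = 1} =>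
      ∑ j, max ⟪(r : EuclideanSpace ℝ (Fin d)), a j⟫ 0) := by
    refine ⟨∑ j, ‖a j‖, ?_⟩
    rintro x ⟨r, rfl⟩
    refine Finset.sum_le_sum fun j _ => ?_
    have h1 : ⟪(r : EuclideanSpace ℝ (Fin d)), a j⟫ ≤ ‖a j‖ := by
      calc ⟪(r : EuclideanSpace ℝ (Fin d)), a j⟫
          ≤ ‖(r : EuclideanSpace ℝ (Fin d))‖ * ‖a j‖ := real_inner_le_norm _ _
        _ = ‖a j‖ := by rw [r.2, one_mul]
    exact max_le h1 (norm_nonneg _)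
  have hinner : ∀ (r : EuclideanSpace ℝ (Fin d)) (b : Fin m → Bool),
      ⟪r, ∑ j, if b j then a j else 0⟫ = ∑ j, if b j then ⟪r, a j⟫ else 0 := by
    intro r b
    rw [inner_sum]
    refine Finset.sum_congr rfl fun j _ => ?_
    by_cases h : b j <;> simp [h]
  apply le_antisymm
  · refine ciSup_le fun r => ?_
    set b : Fin m → Bool := fun j => decide (0 < ⟪(r : EuclideanSpace ℝ (Fin d)), a j⟫)
    have hsum : ∑ j, max ⟪(r : EuclideanSpace ℝ (Fin d)), a j⟫ 0
        = ⟪(r : EuclideanSpace ℝ (Fin d)), ∑ j, if b j then a j else 0⟫ := by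
      rw [hinner]
      refine Finset.sum_congr rfl fun j _ => ?_
      by_cases h : 0 < ⟪(r : EuclideanSpace ℝ (Fin d)), a j⟫
      · rw [if_pos (decide_eq_true h), max_eq_left h.le]
      · rw [if_neg (by simp only [b, decide_eq_true_eq]; exact h), max_eq_right (not_lt.mp h)]
    have hle : ∑ j, max ⟪(r : EuclideanSpace ℝ (Fin d)), a j⟫ 0
        ≤ ‖∑ j, if b j then a j else 0‖ := by
      rw [hsum]
      calc ⟪(r : EuclideanSpace ℝ (Fin d)), ∑ j, if b j then a j else 0⟫
          ≤ ‖(r : EuclideanSpace ℝ (Fin d))‖ * ‖∑ j, if b j then a j else 0‖ :=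
            real_inner_le_norm _ _
        _ = ‖∑ j, if b j then a j else 0‖ := by rw [r.2, one_mul]
    exact hle.trans (le_ciSup (f := fun b : Fin m → Bool => ‖∑ j, if b j then a j else 0‖)
      (Set.Finite.bddAbove (Set.finite_range _)) b)
  · refine ciSup_le fun b => ?_
    set s : EuclideanSpace ℝ (Fin d) := ∑ j, if b j then a j else 0 with hs
    by_cases hs0 : s = 0
    · rw [hs0, norm_zero]
      obtain ⟨r₀⟩ := hne
      calc (0:ℝ) ≤ ∑ j, max ⟪(r₀ : EuclideanSpace ℝ (Fin d)), a j⟫ 0 :=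
            Finset.sum_nonneg fun j _ => le_max_right _ _
        _ ≤ _ := le_ciSup hbddL r₀
    · set r : EuclideanSpace ℝ (Fin d) := ‖s‖⁻¹ • s with hr
      have hnr : ‖r‖ = 1 := by
        rw [hr, norm_smul, norm_inv, norm_norm, inv_mul_cancel₀ (norm_ne_zero_iff.mpr hs0)]
      have h1 : ‖s‖ = ⟪r, s⟫ := by
        rw [hr, real_inner_smul_left, real_inner_self_eq_norm_sq]
        field_simp
      have h2 : ⟪r, s⟫ ≤ ∑ j, max ⟪r, a j⟫ 0 := by
        rw [hs, hinner]
        refine Finset.sum_le_sum fun j _ => ?_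
        by_cases h : b j
        · simp [h, le_max_left]
        · simp [h, le_max_right]
      calc ‖s‖ = ⟪r, s⟫ := h1
        _ ≤ ∑ j, max ⟪r, a j⟫ 0 := h2
        _ ≤ _ := le_ciSup hbddL ⟨r, hnr⟩
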